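/- Let G and H be finite simple graphs. If the Cartesian product G□H is strongly edge-balanced, or the lexicographic product G[H] is strongly edge-balanced, then at least one of the following holds: (i) |V(G)| and |V(H)| are both even; (ii) |E(G)| and |E(H)| are both even; (iii) |E(G)| and |V(G)| are both even; (iv) |E(H)| and |V(H)| are both even; (v) |V(G)|, |V(H)|, |E(G)|, |E(H)| are all odd. -/

import Mathlib

open SimpleGraph

/-- The lexicographic product (composition) `G[H]`. -/
def lexProd {α β : Type*} (G : SimpleGraph α) (H : SimpleGraph β) :
    SimpleGraph (α × β) where
  Adj x y := G.Adj x.1 y.1 ∨ (x.1 = y.1 ∧ H.Adj x.2 y.2)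
  symm := ⟨fun x y h =>
    h.elim (fun h' => Or.inl h'.symm) (fun ⟨he, h2⟩ => Or.inr ⟨he.symm, h2.symm⟩)⟩
  loopless := ⟨fun x h =>
    h.elim G.irrefl (fun ⟨_, h2⟩ => H.irrefl h2)⟩

/-- The direct (tensor, Kronecker) product `G × H`. -/
def tensorProd {α β : Type*} (G : SimpleGraph α) (H : SimpleGraph β) :
    SimpleGraph (α × β) where
  Adj x y := G.Adj x.1 y.1 ∧ H.Adj x.2 y.2
  symm := ⟨fun _ _ ⟨h1, h2⟩ => ⟨h1.symm, h2.symm⟩⟩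
  loopless := ⟨fun x h => G.irrefl h.1⟩

/-- The number of edges labeled `i` by the edge labeling `f`. -/
noncomputable def edgeCount {V : Type*} (G : SimpleGraph V) (f : G.edgeSet → ZMod 2) (i : ZMod 2) : ℕ :=
  Nat.card {e : G.edgeSet // f e = i}

/-- The number of edges incident to `v` that are labeled `i` (the `i`-degree of `v`). -/
noncomputable def labDeg {V : Type*} (G : SimpleGraph V) (f : G.edgeSet → ZMod 2) (i : ZMod 2) (v : V) : ℕ :=
  Nat.card {e : G.edgeSet // f e = i ∧ v ∈ (e : Sym2 V)}

/-- The number of vertices whose induced (partial) label is `i`: those incident to strictly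
more `i`-edges than `(1-i)`-edges. -/
noncomputable def vertexCount {V : Type*} (G : SimpleGraph V) (f : G.edgeSet → ZMod 2) (i : ZMod 2) : ℕ :=
  Nat.card {v : V // labDeg G f (1 - i) v < labDeg G f i v}

/-- An edge labeling (a surjective function onto `ZMod 2`) is edge-friendly if
`|e_f(0) - e_f(1)| ≤ 1`. -/
def EdgeFriendly {V : Type*} (G : SimpleGraph V) (f : G.edgeSet → ZMod 2) : Prop :=
  Function.Surjective f ∧ |(edgeCount G f 0 : ℤ) - (edgeCount G f 1 : ℤ)| ≤ 1

/-- A graph is strongly edge-balanced if some edge-friendly labeling `f` satisfies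
`v_f(0) = v_f(1)` and `e_f(0) = e_f(1)`. -/
def StronglyEdgeBalanced {V : Type*} (G : SimpleGraph V) : Prop :=
  ∃ f : G.edgeSet → ZMod 2, EdgeFriendly G f ∧
    vertexCount G f 0 = vertexCount G f 1 ∧ edgeCount G f 0 = edgeCount G f 1

/- ---------- auxiliary lemmas ---------- -/

lemma parity_key (a b m n : ℕ) (h : Even (m * b + n * a)) :
    (Even a ∧ Even b) ∨ (Even m ∧ Even n) ∨ (Even m ∧ Even a) ∨ (Even n ∧ Even b) ∨
      (Odd a ∧ Odd b ∧ Odd m ∧ Odd n) := by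
  rw [Nat.even_iff] at h
  simp only [Nat.even_iff, Nat.odd_iff]
  have key : (m * b + n * a) % 2 = ((m % 2) * (b % 2) + (n % 2) * (a % 2)) % 2 := by
    conv_lhs => rw [Nat.add_mod, Nat.mul_mod m b, Nat.mul_mod n a, ← Nat.add_mod]
  rcases Nat.mod_two_eq_zero_or_one a with ha | ha <;>
    rcases Nat.mod_two_eq_zero_or_one b with hb | hb <;>
    rcases Nat.mod_two_eq_zero_or_one m with hm | hm <;>
    rcases Nat.mod_two_eq_zero_or_one n with hn | hn <;>
    rw [ha, hb, hm, hn] at key <;> omega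

lemma parity_sq (a b m n : ℕ) (h : Even (m * (b * b) + n * a)) : Even (m * b + n * a) := by
  rw [Nat.even_iff] at h ⊢
  have k1 : (m * (b * b) + n * a) % 2
      = ((m % 2) * ((b % 2) * (b % 2) % 2) + (n % 2) * (a % 2)) % 2 := by
    conv_lhs => rw [Nat.add_mod, Nat.mul_mod m, Nat.mul_mod b b, Nat.mul_mod n a, ← Nat.add_mod]
  have k2 : (m * b + n * a) % 2 = ((m % 2) * (b % 2) + (n % 2) * (a % 2)) % 2 := by
    conv_lhs => rw [Nat.add_mod, Nat.mul_mod m b, Nat.mul_mod n a, ← Nat.add_mod]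
  rcases Nat.mod_two_eq_zero_or_one a with ha | ha <;>
    rcases Nat.mod_two_eq_zero_or_one b with hb | hb <;>
    rcases Nat.mod_two_eq_zero_or_one m with hm | hm <;>
    rcases Nat.mod_two_eq_zero_or_one n with hn | hn <;>
    rw [ha, hb, hm, hn] at k1 k2 <;> omega

/-- A strongly edge-balanced graph has an even number of edges. -/
lemma seb_even_edges {V : Type*} [Finite V] (K : SimpleGraph V)
    (h : StronglyEdgeBalanced K) : Even (Nat.card K.edgeSet) := by
  classical
  obtain ⟨f, -, -, he⟩ := h
  have e1 : ∀ x : ZMod 2, ¬x = 0 ↔ x = 1 := by decide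
  have hc : Nat.card K.edgeSet = edgeCount K f 0 + edgeCount K f 1 := by
    rw [edgeCount, edgeCount, ← Nat.card_sum]
    exact Nat.card_congr ((Equiv.sumCompl (fun e : K.edgeSet => f e = 0)).symm.trans
      (Equiv.sumCongr (Equiv.refl _) (Equiv.subtypeEquivRight (fun e => e1 (f e)))))
  rw [hc, he]
  exact ⟨edgeCount K f 1, rfl⟩

lemma nat_card_edgeSet_eq {V : Type*} [Fintype V] (K : SimpleGraph V)
    [DecidableRel K.Adj] [DecidableEq V] : Nat.card K.edgeSet = K.edgeFinset.card := by
  rw [Nat.card_eq_fintype_card, SimpleGraph.edgeFinset, Set.toFinset_card]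

/-- Handshake lemma in `Nat.card` form. -/
lemma handshake {V : Type*} [Fintype V] (K : SimpleGraph V) :
    2 * Nat.card K.edgeSet = ∑ v : V, Nat.card (K.neighborSet v) := by
  classical
  rw [nat_card_edgeSet_eq, ← K.sum_degrees_eq_twice_card_edges]
  exact Finset.sum_congr rfl fun v _ => by
    rw [← SimpleGraph.card_neighborSet_eq_degree, Nat.card_eq_fintype_card]

/-- Neighborhood cardinality in the box product. -/
lemma box_neighbor_card {α β : Type*} [Fintype α] [Fintype β] (G : SimpleGraph α) (H : SimpleGraph β) (u : α) (v : β) :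
    Nat.card ((G.boxProd H).neighborSet (u, v))
      = Nat.card (G.neighborSet u) + Nat.card (H.neighborSet v) := by
  classical
  have e : ((G.boxProd H).neighborSet (u, v)) ≃ (G.neighborSet u) ⊕ (H.neighborSet v) :=
  { toFun := fun p =>
      if h : G.Adj u p.1.1 then Sum.inl ⟨p.1.1, h⟩
      else Sum.inr ⟨p.1.2, by
        have hp : (G.Adj u p.1.1 ∧ v = p.1.2) ∨ (H.Adj v p.1.2 ∧ u = p.1.1) := p.2
        rcases hp with ⟨h', -⟩ | ⟨h', -⟩
        · exact absurd h' h
        · exact h'⟩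
    invFun := fun s =>
      match s with
      | Sum.inl a => ⟨(a.1, v), Or.inl ⟨a.2, rfl⟩⟩
      | Sum.inr b => ⟨(u, b.1), Or.inr ⟨b.2, rfl⟩⟩
    left_inv := by
      rintro ⟨⟨p1, p2⟩, hp⟩
      have hp' : (G.Adj u p1 ∧ v = p2) ∨ (H.Adj v p2 ∧ u = p1) := hp
      by_cases h : G.Adj u p1
      · have hv : v = p2 := by
          rcases hp' with ⟨-, h2⟩ | ⟨-, h2⟩
          · exact h2
          · exact absurd (h2 ▸ h) (G.irrefl)
        simp only [h, dif_pos]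
        exact Subtype.ext (Prod.ext rfl hv)
      · have hu : u = p1 := by
          rcases hp' with ⟨h', -⟩ | ⟨-, h2⟩
          · exact absurd h' h
          · exact h2
        simp only [h, dif_neg, not_false_iff]
        exact Subtype.ext (Prod.ext hu rfl)
    right_inv := by
      rintro (⟨a, ha⟩ | ⟨b, hb⟩)
      · rw [SimpleGraph.mem_neighborSet] at ha
        simp only [ha, dif_pos]
      · simp only [G.irrefl, dif_neg, not_false_iff] }
  rw [Nat.card_congr e, Nat.card_sum]

/-- Edge count of the box product. -/
lemma box_card {α β : Type*} [Fintype α] [Fintype β] (G : SimpleGraph α) (H : SimpleGraph β) :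
    Nat.card (G.boxProd H).edgeSet
      = Nat.card G.edgeSet * Fintype.card β + Nat.card H.edgeSet * Fintype.card α := by
  classical
  have hb := handshake (G.boxProd H)
  rw [Fintype.sum_prod_type] at hb
  simp only [box_neighbor_card] at hb
  have h1 : ∀ a : α, ∑ b : β, (Nat.card (G.neighborSet a) + Nat.card (H.neighborSet b))
      = Fintype.card β * Nat.card (G.neighborSet a) + ∑ b : β, Nat.card (H.neighborSet b) := by
    intro a
    rw [Finset.sum_add_distrib, Finset.sum_const, Finset.card_univ, smul_eq_mul]
  simp only [h1] at hb
  rw [Finset.sum_add_distrib, Finset.sum_const, Finset.card_univ, smul_eq_mul,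
    ← Finset.mul_sum, ← handshake G, ← handshake H] at hb
  nlinarith [hb]

/-- Neighborhood cardinality in the lexicographic product. -/
lemma lex_neighbor_card {α β : Type*} [Fintype α] [Fintype β]
    (G : SimpleGraph α) (H : SimpleGraph β) (u : α) (v : β) :
    Nat.card ((lexProd G H).neighborSet (u, v))
      = Nat.card (G.neighborSet u) * Fintype.card β + Nat.card (H.neighborSet v) := by
  classical
  have e : ((lexProd G H).neighborSet (u, v)) ≃ ((G.neighborSet u) × β) ⊕ (H.neighborSet v) :=
  { toFun := fun p =>
      if h : G.Adj u p.1.1 then Sum.inl (⟨p.1.1, h⟩, p.1.2)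
      else Sum.inr ⟨p.1.2, by
        have hp : G.Adj u p.1.1 ∨ (u = p.1.1 ∧ H.Adj v p.1.2) := p.2
        rcases hp with h' | ⟨-, h'⟩
        · exact absurd h' h
        · exact h'⟩
    invFun := fun s =>
      match s with
      | Sum.inl (a, b) => ⟨(a.1, b), Or.inl a.2⟩
      | Sum.inr b => ⟨(u, b.1), Or.inr ⟨rfl, b.2⟩⟩
    left_inv := by
      rintro ⟨⟨p1, p2⟩, hp⟩
      by_cases h : G.Adj u p1
      · simp only [h, dif_pos]
      · have hu : u = p1 := by
          have hp' : G.Adj u p1 ∨ (u = p1 ∧ H.Adj v p2) := hp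
          rcases hp' with h' | ⟨he, -⟩
          · exact absurd h' h
          · exact he
        simp only [h, dif_neg, not_false_iff]
        exact Subtype.ext (Prod.ext hu rfl)
    right_inv := by
      rintro (⟨⟨a, ha⟩, b⟩ | ⟨b, hb⟩)
      · rw [SimpleGraph.mem_neighborSet] at ha
        simp only [ha, dif_pos]
      · simp only [G.irrefl, dif_neg, not_false_iff] }
  rw [Nat.card_congr e, Nat.card_sum, Nat.card_prod, Nat.card_eq_fintype_card (α := β)]

/-- Edge count of the lexicographic product. -/
lemma lex_card {α β : Type*} [Fintype α] [Fintype β] (G : SimpleGraph α) (H : SimpleGraph β) :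
    Nat.card (lexProd G H).edgeSet
      = Nat.card G.edgeSet * (Fintype.card β * Fintype.card β)
        + Nat.card H.edgeSet * Fintype.card α := by
  classical
  have hb := handshake (lexProd G H)
  rw [Fintype.sum_prod_type] at hb
  simp only [lex_neighbor_card] at hb
  have h1 : ∀ a : α,
      ∑ b : β, (Nat.card (G.neighborSet a) * Fintype.card β + Nat.card (H.neighborSet b))
      = Fintype.card β * (Nat.card (G.neighborSet a) * Fintype.card β)
        + ∑ b : β, Nat.card (H.neighborSet b) := by
    intro a
    rw [Finset.sum_add_distrib, Finset.sum_const, Finset.card_univ, smul_eq_mul]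
  simp only [h1] at hb
  rw [Finset.sum_add_distrib, Finset.sum_const, Finset.card_univ, smul_eq_mul] at hb
  have h2 : ∑ a : α, Fintype.card β * (Nat.card (G.neighborSet a) * Fintype.card β)
      = Fintype.card β * Fintype.card β * ∑ a : α, Nat.card (G.neighborSet a) := by
    rw [Finset.mul_sum]
    exact Finset.sum_congr rfl (fun a _ => by ring)
  rw [h2, ← handshake G, ← handshake H] at hb
  nlinarith [hb]

theorem stronglyEdgeBalanced_imp_parity_conditions {α β : Type*} [Fintype α] [Fintype β]
    (G : SimpleGraph α) (H : SimpleGraph β)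
    (hseb : StronglyEdgeBalanced (G.boxProd H) ∨ StronglyEdgeBalanced (lexProd G H)) :
    (Even (Nat.card α) ∧ Even (Nat.card β)) ∨
      (Even (Nat.card G.edgeSet) ∧ Even (Nat.card H.edgeSet)) ∨
      (Even (Nat.card G.edgeSet) ∧ Even (Nat.card α)) ∨
      (Even (Nat.card H.edgeSet) ∧ Even (Nat.card β)) ∨
      (Odd (Nat.card α) ∧ Odd (Nat.card β) ∧
        Odd (Nat.card G.edgeSet) ∧ Odd (Nat.card H.edgeSet)) := by
  have hca : Nat.card α = Fintype.card α := Nat.card_eq_fintype_card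
  have hcb : Nat.card β = Fintype.card β := Nat.card_eq_fintype_card
  rw [hca, hcb]
  rcases hseb with h | h
  · have he := seb_even_edges _ h
    rw [box_card] at he
    exact parity_key _ _ _ _ he
  · have he := seb_even_edges _ h
    rw [lex_card] at he
    exact parity_key _ _ _ _ (parity_sq _ _ _ _ he)
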